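/- Let t, k ∈ k with char k = 0 and set λ = k, β = −t/2 − k(r−2)/4. In the spherical subalgebra B_{t,k}(n,r), the elements e(g), K(g) := Σ_i (g)_i x_i e, Q(g) := Σ_i (g)_i y_i e, P(g) := Σ_i (g)_i (x_i y_i + y_i x_i)/2 · e (for g ∈ sl_r) satisfy, for indices 1 ≤ a,b,c,d ≤ r with a≠b, c≠d, b≠c, a≠d: [K(E_{ab}), Q(E_{cd})] = −λ Σ_{i≠j} (E_{ad})_i (E_{cb})_j e, up to the identification of elements via the symmetrizer e. -/

import Mathlib

/-! STATEMENT 14: in the spherical subalgebra `B_{t,c}(n,r) = e H_{t,c}(n,r) e` of the extended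
Cherednik algebra, for `g = E_{ab}`, `h = E_{cd}` with `a≠b`, `c≠d`, `b≠c`, `a≠d`, and with
`λ = c`, one has `[K(E_{ab}), Q(E_{cd})] = −λ ∑_{i≠j} (E_{ad})_i (E_{cb})_j e`.
The algebra `H_{t,c}(n,r)` is given by its presentation; we state the identity in any algebra
`A` equipped with a map from the free algebra killing the defining relations (equivalently, in
the quotient algebra `H_{t,c}(n,r)` itself). -/

/-- Generators of the extended Cherednik algebra `H_{t,k}(n,r)`. -/
inductive CherGen (n r : ℕ) : Type
  | x (i : Fin n)
  | y (i : Fin n)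
  | g (s : Equiv.Perm (Fin n))
  | E (i : Fin n) (a b : Fin r)

section
variable (k : Type) [Field k] (t c : k) (n r : ℕ)

def chX (i : Fin n) : FreeAlgebra k (CherGen n r) := FreeAlgebra.ι k (.x i)
def chY (i : Fin n) : FreeAlgebra k (CherGen n r) := FreeAlgebra.ι k (.y i)
def chG (s : Equiv.Perm (Fin n)) : FreeAlgebra k (CherGen n r) := FreeAlgebra.ι k (.g s)
def chE (i : Fin n) (a b : Fin r) : FreeAlgebra k (CherGen n r) := FreeAlgebra.ι k (.E i a b)
def chSigma (i j : Fin n) : FreeAlgebra k (CherGen n r) :=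
  ∑ a : Fin r, ∑ b : Fin r, chE k n r i a b * chE k n r j b a

/-- Defining relations of the extended Cherednik algebra `H_{t,c}(n,r)`. -/
inductive CherRel : FreeAlgebra k (CherGen n r) → FreeAlgebra k (CherGen n r) → Prop
  | xx (i j : Fin n) : CherRel (chX k n r i * chX k n r j) (chX k n r j * chX k n r i)
  | yy (i j : Fin n) : CherRel (chY k n r i * chY k n r j) (chY k n r j * chY k n r i)
  | yx_diag (i : Fin n) :
      CherRel (chY k n r i * chX k n r i)
        (chX k n r i * chY k n r i + algebraMap k _ t -
          c • ∑ m ∈ Finset.univ.erase i, chG k n r (Equiv.swap i m) * chSigma k n r i m)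
  | yx_off (i j : Fin n) (h : i ≠ j) :
      CherRel (chY k n r i * chX k n r j)
        (chX k n r j * chY k n r i + c • (chG k n r (Equiv.swap i j) * chSigma k n r i j))
  | gmul (s s' : Equiv.Perm (Fin n)) : CherRel (chG k n r s * chG k n r s') (chG k n r (s * s'))
  | gone : CherRel (chG k n r 1) 1
  | gx (s : Equiv.Perm (Fin n)) (i : Fin n) :
      CherRel (chG k n r s * chX k n r i) (chX k n r (s i) * chG k n r s)
  | gy (s : Equiv.Perm (Fin n)) (i : Fin n) :
      CherRel (chG k n r s * chY k n r i) (chY k n r (s i) * chG k n r s)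
  | gE (s : Equiv.Perm (Fin n)) (i : Fin n) (a b : Fin r) :
      CherRel (chG k n r s * chE k n r i a b) (chE k n r (s i) a b * chG k n r s)
  | EE (i : Fin n) (a b a' b' : Fin r) :
      CherRel (chE k n r i a b * chE k n r i a' b')
        (if a' = b then chE k n r i a b' else 0)
  | EEc (i j : Fin n) (h : i ≠ j) (a b a' b' : Fin r) :
      CherRel (chE k n r i a b * chE k n r j a' b') (chE k n r j a' b' * chE k n r i a b)
  | Esum (i : Fin n) : CherRel (∑ a : Fin r, chE k n r i a a) 1
  | xE (i j : Fin n) (a b : Fin r) :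
      CherRel (chX k n r i * chE k n r j a b) (chE k n r j a b * chX k n r i)
  | yE (i j : Fin n) (a b : Fin r) :
      CherRel (chY k n r i * chE k n r j a b) (chE k n r j a b * chY k n r i)

/-- The symmetrizer `e = (1/n!) ∑_{s ∈ Sₙ} s`. -/
noncomputable def chSym : FreeAlgebra k (CherGen n r) :=
  ((n.factorial : k))⁻¹ • ∑ s : Equiv.Perm (Fin n), chG k n r s

end

namespace Stmt14Aux

lemma middle_comm {A : Type} [Ring A] (w x y z : A) (h : x * y = y * x) :
    (w * x) * (y * z) = (w * y) * (x * z) := by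
  rw [mul_assoc, ← mul_assoc x, h, mul_assoc, ← mul_assoc]

variable {k : Type} [Field k] {t c : k} {n r : ℕ}
  {A : Type} [Ring A] [Algebra k A]
  {φ : FreeAlgebra k (CherGen n r) →ₐ[k] A}

section rels
variable (hφ : ∀ u v, CherRel k t c n r u v → φ u = φ v)
include hφ

lemma gmulA (s s' : Equiv.Perm (Fin n)) :
    φ (chG k n r s) * φ (chG k n r s') = φ (chG k n r (s * s')) := by
  rw [← map_mul]; exact hφ _ _ (.gmul s s')

lemma gXA (s : Equiv.Perm (Fin n)) (i : Fin n) :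
    φ (chG k n r s) * φ (chX k n r i) = φ (chX k n r (s i)) * φ (chG k n r s) := by
  rw [← map_mul, ← map_mul]; exact hφ _ _ (.gx s i)

lemma gYA (s : Equiv.Perm (Fin n)) (i : Fin n) :
    φ (chG k n r s) * φ (chY k n r i) = φ (chY k n r (s i)) * φ (chG k n r s) := by
  rw [← map_mul, ← map_mul]; exact hφ _ _ (.gy s i)

lemma gEA (s : Equiv.Perm (Fin n)) (i : Fin n) (a b : Fin r) :
    φ (chG k n r s) * φ (chE k n r i a b) = φ (chE k n r (s i) a b) * φ (chG k n r s) := by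
  rw [← map_mul, ← map_mul]; exact hφ _ _ (.gE s i a b)

lemma EEA (i : Fin n) (a b a' b' : Fin r) :
    φ (chE k n r i a b) * φ (chE k n r i a' b') =
      if a' = b then φ (chE k n r i a b') else 0 := by
  rw [← map_mul, hφ _ _ (.EE i a b a' b'), apply_ite φ, map_zero]

lemma EEcA (i j : Fin n) (h : i ≠ j) (a b a' b' : Fin r) :
    φ (chE k n r i a b) * φ (chE k n r j a' b') =
      φ (chE k n r j a' b') * φ (chE k n r i a b) := by
  rw [← map_mul, ← map_mul]; exact hφ _ _ (.EEc i j h a b a' b')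

lemma XEA (i j : Fin n) (a b : Fin r) :
    φ (chX k n r i) * φ (chE k n r j a b) = φ (chE k n r j a b) * φ (chX k n r i) := by
  rw [← map_mul, ← map_mul]; exact hφ _ _ (.xE i j a b)

lemma YEA (i j : Fin n) (a b : Fin r) :
    φ (chY k n r i) * φ (chE k n r j a b) = φ (chE k n r j a b) * φ (chY k n r i) := by
  rw [← map_mul, ← map_mul]; exact hφ _ _ (.yE i j a b)

lemma yxA (i j : Fin n) (h : i ≠ j) :
    φ (chY k n r i) * φ (chX k n r j) =
      φ (chX k n r j) * φ (chY k n r i) +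
        c • (φ (chG k n r (Equiv.swap i j)) * φ (chSigma k n r i j)) := by
  have h1 := hφ _ _ (.yx_off i j h)
  rw [map_mul] at h1
  rw [h1, map_add, map_smul, map_mul]
  rw [map_mul]

end rels

lemma sigA_eq (i j : Fin n) :
    φ (chSigma k n r i j) =
      ∑ p : Fin r, ∑ q : Fin r, φ (chE k n r i p q) * φ (chE k n r j q p) := by
  simp [chSigma, map_sum, map_mul]

lemma eA_eq :
    φ (chSym k n r) = ((n.factorial : k))⁻¹ • ∑ s : Equiv.Perm (Fin n), φ (chG k n r s) := by
  simp [chSym, map_smul, map_sum]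

section sym
variable (hφ : ∀ u v, CherRel k t c n r u v → φ u = φ v)
include hφ

lemma G_mul_eA (s : Equiv.Perm (Fin n)) :
    φ (chG k n r s) * φ (chSym k n r) = φ (chSym k n r) := by
  rw [eA_eq, mul_smul_comm, Finset.mul_sum]
  congr 1
  calc ∑ s' : Equiv.Perm (Fin n), φ (chG k n r s) * φ (chG k n r s')
      = ∑ s' : Equiv.Perm (Fin n), φ (chG k n r (s * s')) := by
        exact Finset.sum_congr rfl fun s' _ => gmulA hφ s s'
    _ = ∑ u : Equiv.Perm (Fin n), φ (chG k n r u) :=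
        Equiv.sum_comp (Equiv.mulLeft s) (fun u => φ (chG k n r u))

lemma eA_idem [CharZero k] : φ (chSym k n r) * φ (chSym k n r) = φ (chSym k n r) := by
  nth_rewrite 1 [eA_eq]
  rw [smul_mul_assoc, Finset.sum_mul]
  have h1 : ∀ s : Equiv.Perm (Fin n),
      φ (chG k n r s) * φ (chSym k n r) = φ (chSym k n r) := G_mul_eA hφ
  simp only [h1]
  rw [Finset.sum_const, Finset.card_univ, Fintype.card_perm, Fintype.card_fin,
    ← Nat.cast_smul_eq_nsmul k, smul_smul,
    inv_mul_cancel₀ (Nat.cast_ne_zero.mpr n.factorial_ne_zero), one_smul]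

omit hφ in
lemma comm_eA {M : A} (hM : ∀ s, φ (chG k n r s) * M = M * φ (chG k n r s)) :
    φ (chSym k n r) * M = M * φ (chSym k n r) := by
  rw [eA_eq, smul_mul_assoc, mul_smul_comm, Finset.sum_mul, Finset.mul_sum]
  exact congrArg _ (Finset.sum_congr rfl fun s _ => hM s)

lemma sandwich [CharZero k] {M : A} (hM : ∀ s, φ (chG k n r s) * M = M * φ (chG k n r s)) :
    φ (chSym k n r) * M * φ (chSym k n r) = M * φ (chSym k n r) := by
  rw [comm_eA hM, mul_assoc, eA_idem hφ]

omit hφ in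
lemma inv_sum {v : Fin n → A}
    (hv : ∀ s i, φ (chG k n r s) * v i = v (s i) * φ (chG k n r s))
    (s : Equiv.Perm (Fin n)) :
    φ (chG k n r s) * (∑ i, v i) = (∑ i, v i) * φ (chG k n r s) := by
  rw [Finset.mul_sum, Finset.sum_mul]
  calc ∑ i, φ (chG k n r s) * v i = ∑ i, v (s i) * φ (chG k n r s) := by simp only [hv]
    _ = _ := Equiv.sum_comp s fun i => v i * φ (chG k n r s)

lemma g_sigma_swap (i j : Fin n) :
    φ (chG k n r (Equiv.swap j i)) * φ (chSigma k n r j i) =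
      φ (chSigma k n r i j) * φ (chG k n r (Equiv.swap j i)) := by
  rw [sigA_eq, sigA_eq, Finset.mul_sum, Finset.sum_mul]
  refine Finset.sum_congr rfl fun p _ => ?_
  rw [Finset.mul_sum, Finset.sum_mul]
  refine Finset.sum_congr rfl fun q _ => ?_
  rw [← mul_assoc, gEA hφ, Equiv.swap_apply_left, mul_assoc, gEA hφ,
    Equiv.swap_apply_right, ← mul_assoc]

lemma contraction (i j : Fin n) (hij : i ≠ j) (a b c' d : Fin r) :
    (φ (chE k n r i a b) * φ (chE k n r j c' d)) * φ (chSigma k n r i j) =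
      φ (chE k n r i a d) * φ (chE k n r j c' b) := by
  rw [sigA_eq]
  simp only [Finset.mul_sum]
  have key : ∀ p q : Fin r,
      (φ (chE k n r i a b) * φ (chE k n r j c' d)) *
        (φ (chE k n r i p q) * φ (chE k n r j q p)) =
      if p = b then (if q = d then φ (chE k n r i a q) * φ (chE k n r j c' p) else 0)
        else 0 := by
    intro p q
    rw [middle_comm _ _ _ _ (EEcA hφ j i (Ne.symm hij) c' d p q),
      EEA hφ i a b p q, EEA hφ j c' d q p]
    simp only [ite_mul, mul_ite, mul_zero, zero_mul]
    split_ifs <;> rfl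
  simp only [key]
  have inner : ∀ p : Fin r,
      (∑ q : Fin r, if p = b then
        (if q = d then φ (chE k n r i a q) * φ (chE k n r j c' p) else 0) else 0) =
      if p = b then φ (chE k n r i a d) * φ (chE k n r j c' p) else 0 := by
    intro p
    split_ifs with h <;> simp [Finset.sum_ite_eq']
  simp only [inner]
  simp [Finset.sum_ite_eq']

lemma pairA [CharZero k] (a b c' d : Fin r) (hbc : b ≠ c') (had : a ≠ d) (i j : Fin n) :
    ((φ (chE k n r i a b) * φ (chX k n r i)) * (φ (chE k n r j c' d) * φ (chY k n r j)) -
     (φ (chE k n r j c' d) * φ (chY k n r j)) * (φ (chE k n r i a b) * φ (chX k n r i))) *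
      φ (chSym k n r) =
    if i = j then 0 else
      (-c) • (φ (chE k n r i a d) * φ (chE k n r j c' b) * φ (chSym k n r)) := by
  by_cases hij : i = j
  · subst hij
    rw [if_pos rfl, middle_comm _ _ _ _ (XEA hφ i i c' d),
      middle_comm _ _ _ _ (YEA hφ i i a b),
      EEA hφ i a b c' d, EEA hφ i c' d a b,
      if_neg (fun h => hbc h.symm), if_neg had]
    simp
  · rw [if_neg hij, middle_comm _ _ _ _ (XEA hφ i j c' d),
      middle_comm _ _ _ _ (YEA hφ j i a b),
      EEcA hφ j i (Ne.symm hij) c' d a b, ← mul_sub,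
      yxA hφ j i (Ne.symm hij), sub_add_cancel_left, mul_neg, mul_smul_comm,
      neg_mul, smul_mul_assoc, neg_smul]
    congr 2
    calc (φ (chE k n r i a b) * φ (chE k n r j c' d)) *
          (φ (chG k n r (Equiv.swap j i)) * φ (chSigma k n r j i)) * φ (chSym k n r)
        = (φ (chE k n r i a b) * φ (chE k n r j c' d)) *
          (φ (chSigma k n r i j) * φ (chG k n r (Equiv.swap j i))) * φ (chSym k n r) := by
          rw [g_sigma_swap hφ i j]
      _ = ((φ (chE k n r i a b) * φ (chE k n r j c' d)) * φ (chSigma k n r i j)) *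
          (φ (chG k n r (Equiv.swap j i)) * φ (chSym k n r)) := by
          rw [← mul_assoc, mul_assoc _ (φ (chG k n r (Equiv.swap j i)))]
      _ = (φ (chE k n r i a d) * φ (chE k n r j c' b)) * φ (chSym k n r) := by
          rw [G_mul_eA hφ, contraction hφ i j hij]

end sym

end Stmt14Aux

set_option maxHeartbeats 2000000 in
theorem spherical_KQ_commutator
    (k : Type) [Field k] [CharZero k] (t c : k) (n r : ℕ)
    (a b c' d : Fin r) (hab : a ≠ b) (hcd : c' ≠ d) (hbc : b ≠ c') (had : a ≠ d)
    (A : Type) [Ring A] [Algebra k A]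
    (φ : FreeAlgebra k (CherGen n r) →ₐ[k] A)
    (hφ : ∀ u v, CherRel k t c n r u v → φ u = φ v) :
    let e := chSym k n r
    let K := e * (∑ i : Fin n, chE k n r i a b * chX k n r i) * e
    let Q := e * (∑ i : Fin n, chE k n r i c' d * chY k n r i) * e
    φ K * φ Q - φ Q * φ K =
      -c • φ (e * (∑ p ∈ (Finset.univ : Finset (Fin n × Fin n)).filter
          (fun p => p.1 ≠ p.2), chE k n r p.1 a d * chE k n r p.2 c' b) * e) := by
  intro e K Q
  have hTinv : ∀ s, φ (chG k n r s) * (∑ i : Fin n, φ (chE k n r i a b) * φ (chX k n r i)) =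
      (∑ i : Fin n, φ (chE k n r i a b) * φ (chX k n r i)) * φ (chG k n r s) :=
    Stmt14Aux.inv_sum (fun s i => by
      rw [← mul_assoc, Stmt14Aux.gEA hφ, mul_assoc, Stmt14Aux.gXA hφ, ← mul_assoc])
  have hSinv : ∀ s, φ (chG k n r s) * (∑ i : Fin n, φ (chE k n r i c' d) * φ (chY k n r i)) =
      (∑ i : Fin n, φ (chE k n r i c' d) * φ (chY k n r i)) * φ (chG k n r s) :=
    Stmt14Aux.inv_sum (fun s i => by
      rw [← mul_assoc, Stmt14Aux.gEA hφ, mul_assoc, Stmt14Aux.gYA hφ, ← mul_assoc])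
  have hMinv : ∀ s, φ (chG k n r s) *
      (∑ p ∈ (Finset.univ : Finset (Fin n × Fin n)).filter (fun p => p.1 ≠ p.2),
        φ (chE k n r p.1 a d) * φ (chE k n r p.2 c' b)) =
      (∑ p ∈ (Finset.univ : Finset (Fin n × Fin n)).filter (fun p => p.1 ≠ p.2),
        φ (chE k n r p.1 a d) * φ (chE k n r p.2 c' b)) * φ (chG k n r s) := by
    intro s
    rw [Finset.mul_sum, Finset.sum_mul]
    calc ∑ p ∈ (Finset.univ : Finset (Fin n × Fin n)).filter (fun p => p.1 ≠ p.2),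
          φ (chG k n r s) * (φ (chE k n r p.1 a d) * φ (chE k n r p.2 c' b))
        = ∑ p ∈ (Finset.univ : Finset (Fin n × Fin n)).filter (fun p => p.1 ≠ p.2),
          (φ (chE k n r (s p.1) a d) * φ (chE k n r (s p.2) c' b)) * φ (chG k n r s) := by
          refine Finset.sum_congr rfl fun p _ => ?_
          rw [← mul_assoc, Stmt14Aux.gEA hφ, mul_assoc, Stmt14Aux.gEA hφ, ← mul_assoc]
      _ = ∑ p ∈ (Finset.univ : Finset (Fin n × Fin n)).filter (fun p => p.1 ≠ p.2),
          (φ (chE k n r p.1 a d) * φ (chE k n r p.2 c' b)) * φ (chG k n r s) := by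
          rw [Finset.sum_filter, Finset.sum_filter]
          calc ∑ p : Fin n × Fin n, (if p.1 ≠ p.2 then
                (φ (chE k n r (s p.1) a d) * φ (chE k n r (s p.2) c' b)) * φ (chG k n r s)
                else 0)
              = ∑ p : Fin n × Fin n, (fun q : Fin n × Fin n => if q.1 ≠ q.2 then
                (φ (chE k n r q.1 a d) * φ (chE k n r q.2 c' b)) * φ (chG k n r s) else 0)
                ((Equiv.prodCongr s s) p) := by
                refine Finset.sum_congr rfl fun p _ => ?_
                simp [Equiv.prodCongr_apply, Prod.map, EmbeddingLike.apply_eq_iff_eq]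
            _ = _ := by
                simpa using Equiv.sum_comp (Equiv.prodCongr s s)
                  (fun q : Fin n × Fin n => if q.1 ≠ q.2 then
                    (φ (chE k n r q.1 a d) * φ (chE k n r q.2 c' b)) * φ (chG k n r s) else 0)
  have hφK : φ K = (∑ i : Fin n, φ (chE k n r i a b) * φ (chX k n r i)) * φ (chSym k n r) := by
    show φ (chSym k n r * (∑ i : Fin n, chE k n r i a b * chX k n r i) * chSym k n r) = _
    rw [map_mul, map_mul, map_sum]
    simp only [map_mul]
    exact Stmt14Aux.sandwich hφ hTinv
  have hφQ : φ Q = (∑ i : Fin n, φ (chE k n r i c' d) * φ (chY k n r i)) * φ (chSym k n r) := by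
    show φ (chSym k n r * (∑ i : Fin n, chE k n r i c' d * chY k n r i) * chSym k n r) = _
    rw [map_mul, map_mul, map_sum]
    simp only [map_mul]
    exact Stmt14Aux.sandwich hφ hSinv
  have hφR : φ (e * (∑ p ∈ (Finset.univ : Finset (Fin n × Fin n)).filter
      (fun p => p.1 ≠ p.2), chE k n r p.1 a d * chE k n r p.2 c' b) * e) =
      (∑ p ∈ (Finset.univ : Finset (Fin n × Fin n)).filter (fun p => p.1 ≠ p.2),
        φ (chE k n r p.1 a d) * φ (chE k n r p.2 c' b)) * φ (chSym k n r) := by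
    show φ (chSym k n r * _ * chSym k n r) = _
    rw [map_mul, map_mul, map_sum]
    simp only [map_mul]
    exact Stmt14Aux.sandwich hφ hMinv
  rw [hφK, hφQ, hφR]
  have heS : φ (chSym k n r) * (∑ i : Fin n, φ (chE k n r i c' d) * φ (chY k n r i)) =
      (∑ i : Fin n, φ (chE k n r i c' d) * φ (chY k n r i)) * φ (chSym k n r) :=
    Stmt14Aux.comm_eA hSinv
  have heT : φ (chSym k n r) * (∑ i : Fin n, φ (chE k n r i a b) * φ (chX k n r i)) =
      (∑ i : Fin n, φ (chE k n r i a b) * φ (chX k n r i)) * φ (chSym k n r) :=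
    Stmt14Aux.comm_eA hTinv
  have key1 : ∀ (T S : A), φ (chSym k n r) * S = S * φ (chSym k n r) →
      T * φ (chSym k n r) * (S * φ (chSym k n r)) = (T * S) * φ (chSym k n r) := by
    intro T S h
    rw [mul_assoc T, ← mul_assoc (φ (chSym k n r)), h, mul_assoc S,
      Stmt14Aux.eA_idem hφ, ← mul_assoc]
  rw [key1 _ _ heS, key1 _ _ heT, ← sub_mul, Finset.sum_mul_sum, Finset.sum_mul_sum,
    Finset.sum_comm (s := (Finset.univ : Finset (Fin n))), ← Finset.sum_sub_distrib]
  simp only [← Finset.sum_sub_distrib]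
  rw [Finset.sum_mul]
  simp only [Finset.sum_mul]
  simp only [Stmt14Aux.pairA hφ a b c' d hbc had]
  rw [Finset.sum_filter, Finset.smul_sum, Fintype.sum_prod_type, Finset.sum_comm]
  refine Finset.sum_congr rfl fun i _ => Finset.sum_congr rfl fun j _ => ?_
  by_cases h : i = j <;> simp [h]
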